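/- If h = 1_{(−∞,z]} for some z ∈ ℝ, then the solution y of the Stein equation satisfies ‖y'‖_∞ ≤ 1, where y'(x) := (1−ψ)x y(x) + h(x) − h̄_ψ is the derivative of y (defined for all x ≠ z). -/

import Mathlib

open MeasureTheory ProbabilityTheory Real Set

noncomputable section

/-- `h̄_ψ = E h(N)` for `N ~ N(0, (1-ψ)⁻¹)`. -/
def gaussMean (ψ : ℝ) (h : ℝ → ℝ) : ℝ :=
  ∫ x, h x ∂(gaussianReal 0 (Real.toNNReal (1 - ψ)⁻¹))

/-- The bounded solution `y` of the Stein equation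
`y'(x) - (1-ψ) x y(x) = h(x) - h̄_ψ`, given explicitly by
`y(x) = -e^{(1-ψ)x²/2} ∫_x^∞ e^{-(1-ψ)t²/2} (h(t) - h̄_ψ) dt`. -/
def steinSol (ψ : ℝ) (h : ℝ → ℝ) (x : ℝ) : ℝ :=
  - Real.exp ((1 - ψ) * x ^ 2 / 2) *
      ∫ t in Set.Ioi x, Real.exp (-((1 - ψ) * t ^ 2 / 2)) * (h t - gaussMean ψ h)

namespace SteinAux

open Filter

variable {a : ℝ}

lemma intE (ha : 0 < a) : Integrable fun t : ℝ => rexp (-(a * t ^ 2 / 2)) := by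
  have h := integrable_exp_neg_mul_sq (show 0 < a / 2 by linarith)
  refine h.congr ?_
  filter_upwards with t
  ring_nf

lemma intXE (ha : 0 < a) : Integrable fun t : ℝ => t * rexp (-(a * t ^ 2 / 2)) := by
  have h := integrable_mul_exp_neg_mul_sq (show 0 < a / 2 by linarith)
  refine h.congr ?_
  filter_upwards with t
  ring_nf

lemma intXE_Ioi (ha : 0 < a) (x : ℝ) :
    ∫ t in Ioi x, t * rexp (-(a * t ^ 2 / 2)) = rexp (-(a * x ^ 2 / 2)) / a := by
  have hderiv : ∀ t : ℝ, HasDerivAt (fun t : ℝ => -(rexp (-(a * t ^ 2 / 2)) / a))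
      (t * rexp (-(a * t ^ 2 / 2))) t := by
    intro t
    have h1 : HasDerivAt (fun t : ℝ => -(a * t ^ 2 / 2)) (-(a * t)) t := by
      have := ((hasDerivAt_pow 2 t).const_mul a).div_const 2
      exact this.neg.congr_deriv (by ring)
    have h2 := (h1.exp.div_const a).neg
    refine h2.congr_deriv ?_
    field_simp
  have htend : Tendsto (fun t : ℝ => -(rexp (-(a * t ^ 2 / 2)) / a)) atTop (nhds 0) := by
    have h1 : Tendsto (fun t : ℝ => -(a * t ^ 2 / 2)) atTop atBot := by
      apply tendsto_neg_atBot_iff.mpr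
      apply Tendsto.atTop_div_const (by norm_num)
      exact (tendsto_pow_atTop (by norm_num)).const_mul_atTop ha
    have := (Real.tendsto_exp_atBot.comp h1).div_const a
    simpa using this.neg
  have := integral_Ioi_of_hasDerivAt_of_tendsto
    (f := fun t : ℝ => -(rexp (-(a * t ^ 2 / 2)) / a))
    (f' := fun t => t * rexp (-(a * t ^ 2 / 2)))
    ((hderiv x).continuousAt.continuousWithinAt)
    (fun t _ => hderiv t) ((intXE ha).integrableOn) htend
  rw [this]
  ring

/-- Gaussian tail bound: `a x ∫_{Ioi x} e^{-at²/2} ≤ e^{-ax²/2}` for `x > 0`. -/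
lemma tail_Ioi (ha : 0 < a) {x : ℝ} (hx : 0 < x) :
    a * x * ∫ t in Ioi x, rexp (-(a * t ^ 2 / 2)) ≤ rexp (-(a * x ^ 2 / 2)) := by
  have hmono : ∫ t in Ioi x, rexp (-(a * t ^ 2 / 2))
      ≤ ∫ t in Ioi x, (t / x) * rexp (-(a * t ^ 2 / 2)) := by
    refine setIntegral_mono_on ((intE ha).integrableOn)
      (((intXE ha).div_const x).integrableOn.congr_fun ?_ measurableSet_Ioi)
      measurableSet_Ioi ?_
    · intro t _; ring
    · intro t ht
      have h1 : (1 : ℝ) ≤ t / x := (one_le_div hx).mpr (le_of_lt ht)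
      nlinarith [Real.exp_pos (-(a * t ^ 2 / 2))]
  have heq : ∫ t in Ioi x, (t / x) * rexp (-(a * t ^ 2 / 2))
      = (rexp (-(a * x ^ 2 / 2)) / a) / x := by
    rw [← intXE_Ioi ha x, ← integral_div]
    congr 1; funext t; ring
  calc a * x * ∫ t in Ioi x, rexp (-(a * t ^ 2 / 2))
      ≤ a * x * ((rexp (-(a * x ^ 2 / 2)) / a) / x) := by
        rw [heq] at hmono
        exact mul_le_mul_of_nonneg_left hmono (by positivity)
    _ = rexp (-(a * x ^ 2 / 2)) := by field_simp

lemma Iic_eq_Ioi (x : ℝ) :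
    ∫ t in Iic x, rexp (-(a * t ^ 2 / 2)) = ∫ t in Ioi (-x), rexp (-(a * t ^ 2 / 2)) := by
  rw [show Iic x = Iic (-(-x)) by ring_nf, ← integral_comp_neg_Ioi]
  congr 1; funext t; ring_nf

lemma tail_Iic (ha : 0 < a) {x : ℝ} (hx : x < 0) :
    a * (-x) * ∫ t in Iic x, rexp (-(a * t ^ 2 / 2)) ≤ rexp (-(a * x ^ 2 / 2)) := by
  rw [Iic_eq_Ioi]
  have := tail_Ioi ha (show (0:ℝ) < -x by linarith)
  calc a * (-x) * ∫ t in Ioi (-x), rexp (-(a * t ^ 2 / 2))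
      ≤ rexp (-(a * (-x) ^ 2 / 2)) := this
    _ = rexp (-(a * x ^ 2 / 2)) := by ring_nf

lemma total (ha : 0 < a) : ∫ t : ℝ, rexp (-(a * t ^ 2 / 2)) = Real.sqrt (2 * π / a) := by
  have h := integral_gaussian (a / 2)
  rw [show π / (a / 2) = 2 * π / a by field_simp] at h
  rw [← h]
  congr 1; funext t; ring_nf

lemma split (ha : 0 < a) (u : ℝ) :
    (∫ t in Iic u, rexp (-(a * t ^ 2 / 2))) + (∫ t in Ioi u, rexp (-(a * t ^ 2 / 2)))
      = Real.sqrt (2 * π / a) := by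
  have h := integral_add_compl (s := Iic u) measurableSet_Iic (intE ha)
  rw [compl_Iic] at h
  rw [h, total ha]

lemma hbar_eq_aux (ψ : ℝ) (hψ1 : ψ < 1) (z : ℝ) :
    gaussMean ψ (Set.indicator (Set.Iic z) fun _ => (1 : ℝ)) =
      (Real.sqrt (2 * π / (1 - ψ)))⁻¹ * ∫ t in Iic z, rexp (-((1 - ψ) * t ^ 2 / 2)) := by
  have ha : 0 < 1 - ψ := by linarith
  set v : NNReal := Real.toNNReal (1 - ψ)⁻¹ with hv_def
  have hv : v ≠ 0 := ne_of_gt (Real.toNNReal_pos.mpr (by positivity))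
  have hvc : (v : ℝ) = (1 - ψ)⁻¹ := Real.coe_toNNReal _ (by positivity)
  have hpdf : ∀ t, gaussianPDFReal 0 v t
      = (Real.sqrt (2 * π / (1 - ψ)))⁻¹ * rexp (-((1 - ψ) * t ^ 2 / 2)) := by
    intro t
    rw [gaussianPDFReal, hvc,
      show (2:ℝ) * π * (1 - ψ)⁻¹ = 2 * π / (1 - ψ) from by ring,
      show -(t - (0:ℝ)) ^ 2 / (2 * (1 - ψ)⁻¹) = -((1 - ψ) * t ^ 2 / 2) from by
        field_simp; ring]
  unfold gaussMean
  rw [integral_indicator measurableSet_Iic, setIntegral_const,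
    measureReal_def, gaussianReal_apply_eq_integral 0 hv (Iic z),
    ENNReal.toReal_ofReal
      (setIntegral_nonneg measurableSet_Iic fun t _ => gaussianPDFReal_nonneg _ _ _),
    smul_eq_mul, mul_one,
    setIntegral_congr_fun measurableSet_Iic (fun t _ => hpdf t), integral_const_mul]

end SteinAux

set_option maxHeartbeats 2000000 in
theorem stmt7 (ψ : ℝ) (hψ0 : 0 ≤ ψ) (hψ1 : ψ < 1) (z : ℝ) :
    ∀ x : ℝ, x ≠ z →
      |(1 - ψ) * x * steinSol ψ (Set.indicator (Set.Iic z) fun _ => (1 : ℝ)) x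
          + (Set.indicator (Set.Iic z) fun _ => (1 : ℝ)) x
          - gaussMean ψ (Set.indicator (Set.Iic z) fun _ => (1 : ℝ))|
        ≤ 1 := by
  intro x hxz
  have ha : 0 < 1 - ψ := by linarith
  simp only [steinSol]
  set a := 1 - ψ with ha_def
  set hbar := gaussMean ψ (Set.indicator (Set.Iic z) fun _ => (1 : ℝ)) with hbar_def
  set c : ℝ := (Real.sqrt (2 * π / a))⁻¹ with hc_def
  set L : ℝ → ℝ := fun u => ∫ t in Iic u, rexp (-(a * t ^ 2 / 2)) with hL_def
  set G : ℝ → ℝ := fun u => ∫ t in Ioi u, rexp (-(a * t ^ 2 / 2)) with hG_def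
  have hT : 0 < Real.sqrt (2 * π / a) := Real.sqrt_pos.mpr (by positivity)
  have hc0 : 0 < c := by positivity
  have hLG : ∀ u, L u + G u = Real.sqrt (2 * π / a) := fun u => SteinAux.split ha u
  have hcLG : ∀ u, c * (L u + G u) = 1 := fun u => by
    rw [hLG u, hc_def]; exact inv_mul_cancel₀ hT.ne'
  have hL0 : ∀ u, 0 ≤ L u := fun u =>
    setIntegral_nonneg measurableSet_Iic fun t _ => (Real.exp_pos _).le
  have hG0 : ∀ u, 0 ≤ G u := fun u =>
    setIntegral_nonneg measurableSet_Ioi fun t _ => (Real.exp_pos _).le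
  have hbar_eq : hbar = c * L z := SteinAux.hbar_eq_aux ψ hψ1 z
  have hbar0 : 0 ≤ hbar := hbar_eq ▸ mul_nonneg hc0.le (hL0 z)
  have hbar1 : hbar ≤ 1 := by
    rw [hbar_eq]
    nlinarith [hcLG z, hG0 z, hc0]
  have hee : rexp (a * x ^ 2 / 2) * rexp (-(a * x ^ 2 / 2)) = 1 := by
    rw [← Real.exp_add]; simp
  have he0 : 0 < rexp (a * x ^ 2 / 2) := Real.exp_pos _
  set e : ℝ := rexp (a * x ^ 2 / 2) with he_def
  -- key tail bounds
  have key_pos : 0 < x → a * x * e * G x ≤ 1 := by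
    intro hx
    have h1 := SteinAux.tail_Ioi ha hx
    calc a * x * e * G x = e * (a * x * G x) := by ring
      _ ≤ e * rexp (-(a * x ^ 2 / 2)) := by
          exact mul_le_mul_of_nonneg_left h1 he0.le
      _ = 1 := hee
  have key_neg : x ≤ 0 → a * (-x) * e * L x ≤ 1 := by
    intro hx
    rcases hx.lt_or_eq with hx' | hx'
    · have h1 := SteinAux.tail_Iic ha hx'
      calc a * (-x) * e * L x = e * (a * (-x) * L x) := by ring
        _ ≤ e * rexp (-(a * x ^ 2 / 2)) := by
            exact mul_le_mul_of_nonneg_left h1 he0.le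
        _ = 1 := hee
    · simp [hx']
  rcases lt_or_gt_of_ne hxz with hlt | hgt
  · -- case x < z
    have hind : Set.indicator (Set.Iic z) (fun _ => (1 : ℝ)) x = 1 :=
      Set.indicator_of_mem (mem_Iic.mpr hlt.le) _
    have eq1 : EqOn (fun t => rexp (-(a * t ^ 2 / 2)) * (1 - hbar))
        (fun t => rexp (-(a * t ^ 2 / 2))
          * (Set.indicator (Set.Iic z) (fun _ => (1 : ℝ)) t - hbar)) (Ioc x z) := by
      intro t ht
      simp only
      rw [Set.indicator_of_mem (mem_Iic.mpr ht.2)]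
    have eq2 : EqOn (fun t => rexp (-(a * t ^ 2 / 2)) * (0 - hbar))
        (fun t => rexp (-(a * t ^ 2 / 2))
          * (Set.indicator (Set.Iic z) (fun _ => (1 : ℝ)) t - hbar)) (Ioi z) := by
      intro t ht
      simp only
      rw [Set.indicator_of_notMem (by simpa using not_le.mpr ht)]
    have hIocL : L x + (∫ t in Ioc x z, rexp (-(a * t ^ 2 / 2))) = L z := by
      rw [hL_def]
      simp only
      rw [← setIntegral_union (Iic_disjoint_Ioc le_rfl) measurableSet_Ioc
        ((SteinAux.intE ha).integrableOn) ((SteinAux.intE ha).integrableOn),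
        Iic_union_Ioc_eq_Iic hlt.le]
    have hintegral : (∫ t in Ioi x, rexp (-(a * t ^ 2 / 2))
        * (Set.indicator (Set.Iic z) (fun _ => (1 : ℝ)) t - hbar))
        = (L z - L x) * (1 - hbar) + G z * (0 - hbar) := by
      rw [show Ioi x = Ioc x z ∪ Ioi z from (Ioc_union_Ioi_eq_Ioi hlt.le).symm,
        setIntegral_union (Ioc_disjoint_Ioi le_rfl) measurableSet_Ioi
          ((((SteinAux.intE ha).mul_const (1 - hbar)).integrableOn).congr_fun eq1
            measurableSet_Ioc)
          ((((SteinAux.intE ha).mul_const (0 - hbar)).integrableOn).congr_fun eq2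
            measurableSet_Ioi),
        setIntegral_congr_fun measurableSet_Ioc eq1.symm,
        setIntegral_congr_fun measurableSet_Ioi eq2.symm,
        integral_mul_const, integral_mul_const]
      have : (∫ t in Ioc x z, rexp (-(a * t ^ 2 / 2))) = L z - L x := by linarith
      rw [this]
    rw [hintegral, hind]
    have hval : a * x * (-e * ((L z - L x) * (1 - hbar) + G z * (0 - hbar))) + 1 - hbar
        = (1 - hbar) * (a * x * e * L x) + (1 - hbar)
          + (a * x * e) * (L z * (c * (L z + G z) - 1)) := by
      rw [hbar_eq]; ring
    rw [hval, hcLG z]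
    simp only [sub_self, mul_zero, add_zero]
    have h1mh : 1 - hbar = c * G z := by rw [hbar_eq]; linarith [hcLG z]
    rcases le_or_gt x 0 with hx0 | hx0
    · have hw1 : -1 ≤ a * x * e * L x := by
        have := key_neg hx0
        linarith
      have hw0 : a * x * e * L x ≤ 0 := by
        have : 0 ≤ a * (-x) * e * L x :=
          mul_nonneg (mul_nonneg (mul_nonneg ha.le (by linarith)) he0.le) (hL0 x)
        linarith
      rw [abs_le]
      constructor
      · nlinarith [mul_nonneg (by linarith [hbar1] : (0:ℝ) ≤ 1 - hbar)
          (by linarith : (0:ℝ) ≤ a * x * e * L x + 1)]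
      · nlinarith [mul_le_one₀ (by linarith [hbar0] : (1:ℝ) - hbar ≤ 1)
          (by linarith : (0:ℝ) ≤ a * x * e * L x + 1)
          (by linarith : a * x * e * L x + 1 ≤ 1)]
    · have hw0 : 0 ≤ a * x * e * L x :=
        mul_nonneg (mul_nonneg (mul_nonneg ha.le hx0.le) he0.le) (hL0 x)
      have hGmono : G z ≤ G x := by
        refine setIntegral_mono_set ((SteinAux.intE ha).integrableOn)
          (ae_of_all _ fun t => (Real.exp_pos _).le) ?_
        exact HasSubset.Subset.eventuallyLE (Ioi_subset_Ioi hlt.le)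
      have h1mhle : 1 - hbar ≤ c * G x := by
        rw [h1mh]; exact mul_le_mul_of_nonneg_left hGmono hc0.le
      rw [abs_le]
      constructor
      · nlinarith [mul_nonneg (by linarith [hbar1] : (0:ℝ) ≤ 1 - hbar)
          (by linarith : (0:ℝ) ≤ a * x * e * L x + 1)]
      · have h1 : (1 - hbar) * (a * x * e * L x + 1)
            ≤ (c * G x) * (a * x * e * L x + 1) :=
          mul_le_mul_of_nonneg_right h1mhle (by linarith)
        have h2 : (c * G x) * (a * x * e * L x + 1)
            = c * G x + (a * x * e * G x) * (c * L x) := by ring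
        have h3 : (a * x * e * G x) * (c * L x) ≤ 1 * (c * L x) :=
          mul_le_mul_of_nonneg_right (key_pos hx0) (mul_nonneg hc0.le (hL0 x))
        have h4 : c * L x + c * G x = 1 := by linear_combination hcLG x
        have h0 : (1 - hbar) * (a * x * e * L x + 1)
            = (1 - hbar) * (a * x * e * L x) + (1 - hbar) := by ring
        linarith
  · -- case z < x
    have hind : Set.indicator (Set.Iic z) (fun _ => (1 : ℝ)) x = 0 :=
      Set.indicator_of_notMem (by simpa using not_le.mpr hgt) _
    have eq2 : EqOn (fun t => rexp (-(a * t ^ 2 / 2)) * (0 - hbar))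
        (fun t => rexp (-(a * t ^ 2 / 2))
          * (Set.indicator (Set.Iic z) (fun _ => (1 : ℝ)) t - hbar)) (Ioi x) := by
      intro t ht
      simp only
      rw [Set.indicator_of_notMem (by simpa using not_le.mpr (hgt.trans ht))]
    have hintegral : (∫ t in Ioi x, rexp (-(a * t ^ 2 / 2))
        * (Set.indicator (Set.Iic z) (fun _ => (1 : ℝ)) t - hbar))
        = G x * (0 - hbar) := by
      rw [setIntegral_congr_fun measurableSet_Ioi eq2.symm, integral_mul_const]
    rw [hintegral, hind]
    have hval : a * x * (-e * (G x * (0 - hbar))) + 0 - hbar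
        = hbar * (a * x * e * G x) - hbar := by ring
    rw [hval]
    rcases le_or_gt x 0 with hx0 | hx0
    · have hLmono : L z ≤ L x := by
        refine setIntegral_mono_set ((SteinAux.intE ha).integrableOn)
          (ae_of_all _ fun t => (Real.exp_pos _).le) ?_
        exact HasSubset.Subset.eventuallyLE (Iic_subset_Iic.mpr hgt.le)
      have hbarle : hbar ≤ c * L x := by
        rw [hbar_eq]; exact mul_le_mul_of_nonneg_left hLmono hc0.le
      have hw0 : a * x * e * G x ≤ 0 := by
        have : 0 ≤ a * (-x) * e * G x :=
          mul_nonneg (mul_nonneg (mul_nonneg ha.le (by linarith)) he0.le) (hG0 x)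
        linarith
      rw [abs_le]
      constructor
      · have h1 : hbar * (1 - a * x * e * G x)
            ≤ (c * L x) * (1 - a * x * e * G x) :=
          mul_le_mul_of_nonneg_right hbarle (by linarith)
        have h2 : (c * L x) * (1 - a * x * e * G x)
            = c * L x + (a * (-x) * e * L x) * (c * G x) := by ring
        have h3 : (a * (-x) * e * L x) * (c * G x) ≤ 1 * (c * G x) :=
          mul_le_mul_of_nonneg_right (key_neg hx0) (mul_nonneg hc0.le (hG0 x))
        have h4 : c * L x + c * G x = 1 := by linear_combination hcLG x
        have h0 : hbar * (1 - a * x * e * G x)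
            = hbar - hbar * (a * x * e * G x) := by ring
        linarith
      · nlinarith [mul_nonpos_of_nonneg_of_nonpos hbar0 hw0]
    · have hw1 : a * x * e * G x ≤ 1 := key_pos hx0
      have hw0 : 0 ≤ a * x * e * G x :=
        mul_nonneg (mul_nonneg (mul_nonneg ha.le hx0.le) he0.le) (hG0 x)
      rw [abs_le]
      constructor
      · nlinarith [mul_nonneg hbar0 hw0]
      · nlinarith [mul_le_mul_of_nonneg_left hw1 hbar0]

end
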